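/- For every c ∈ R, the sublevel set { (β₀, β, α) ∈ R × R^d × R^n : L(β₀, β, α) ≤ c } of the STRLS objective L(β₀, β, α) = (1/2)‖y − β₀·1 − Xβ − α‖₂² + (1/2)T_h(α) + λ‖β‖₁ is bounded. -/

import Mathlib

/-- Trimmed squares function. -/
noncomputable def Th (n h : ℕ) (r : Fin n → ℝ) : ℝ :=
  sInf {s : ℝ | ∃ Λ : Finset (Fin n), Λ.card = h ∧ s = ∑ i ∈ Λ, r i ^ 2}

lemma Th_set_nonempty (n h : ℕ) (hhn : h ≤ n) (r : Fin n → ℝ) :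
    {s : ℝ | ∃ Λ : Finset (Fin n), Λ.card = h ∧ s = ∑ i ∈ Λ, r i ^ 2}.Nonempty := by
  obtain ⟨Λ, -, hΛ⟩ := Finset.exists_subset_card_eq (s := (Finset.univ : Finset (Fin n))) (n := h)
    (by simpa using hhn)
  exact ⟨∑ i ∈ Λ, r i ^ 2, Λ, hΛ, rfl⟩

lemma Th_set_finite (n h : ℕ) (r : Fin n → ℝ) :
    {s : ℝ | ∃ Λ : Finset (Fin n), Λ.card = h ∧ s = ∑ i ∈ Λ, r i ^ 2}.Finite := by
  apply Set.Finite.subset (Set.finite_range (fun Λ : Finset (Fin n) => ∑ i ∈ Λ, r i ^ 2))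
  rintro s ⟨Λ, -, rfl⟩
  exact ⟨Λ, rfl⟩

lemma Th_nonneg (n h : ℕ) (r : Fin n → ℝ) : 0 ≤ Th n h r := by
  apply Real.sInf_nonneg
  rintro s ⟨Λ, -, rfl⟩
  exact Finset.sum_nonneg fun i _ => sq_nonneg _

lemma Th_attained (n h : ℕ) (hhn : h ≤ n) (r : Fin n → ℝ) :
    ∃ Λ : Finset (Fin n), Λ.card = h ∧ Th n h r = ∑ i ∈ Λ, r i ^ 2 :=
  (Th_set_nonempty n h hhn r).csInf_mem (Th_set_finite n h r)

/-- every sublevel set of the STRLS objective is bounded. -/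
theorem stmt_10 (n d h : ℕ) (hh : 1 ≤ h) (hhn : h ≤ n)
    (y : Fin n → ℝ) (X : Matrix (Fin n) (Fin d) ℝ) (lam : ℝ) (hlam : 0 < lam)
    (c : ℝ) :
    Bornology.IsBounded {p : ℝ × (Fin d → ℝ) × (Fin n → ℝ) |
      (1 / 2) * ∑ i, (y i - p.1 - X.mulVec p.2.1 i - p.2.2 i) ^ 2
        + (1 / 2) * Th n h p.2.2 + lam * ∑ j, |p.2.1 j| ≤ c} := by
  rw [isBounded_iff_forall_norm_le]
  set C := max c 0 with hC
  have hC0 : 0 ≤ C := le_max_right _ _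
  set Y := ∑ i, |y i| with hYdef
  have hY0 : 0 ≤ Y := Finset.sum_nonneg fun i _ => abs_nonneg _
  set M := ∑ i, ∑ j, |X i j| with hMdef
  have hM0 : 0 ≤ M := Finset.sum_nonneg fun i _ => Finset.sum_nonneg fun j _ => abs_nonneg _
  set B := C / lam with hBdef
  have hB0 : 0 ≤ B := div_nonneg hC0 hlam.le
  set s := Real.sqrt (2 * C) with hsdef
  have hs0 : 0 ≤ s := Real.sqrt_nonneg _
  set A := Y + M * B + s + s with hAdef
  set D := Y + A + M * B + s with hDdef
  refine ⟨max A (max B D), ?_⟩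
  rintro ⟨β₀, β, α⟩ hp
  simp only [Set.mem_setOf_eq] at hp
  have hsum0 : (0:ℝ) ≤ ∑ i, (y i - β₀ - X.mulVec β i - α i) ^ 2 :=
    Finset.sum_nonneg fun i _ => sq_nonneg _
  have hTh0 : 0 ≤ Th n h α := Th_nonneg n h α
  have habs0 : (0:ℝ) ≤ ∑ j, |β j| := Finset.sum_nonneg fun j _ => abs_nonneg _
  have hcC : c ≤ C := le_max_left _ _
  have h1 : ∑ i, (y i - β₀ - X.mulVec β i - α i) ^ 2 ≤ 2 * C := by
    linarith [mul_nonneg hlam.le habs0, hsum0, hTh0, hcC]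
  have h2 : Th n h α ≤ 2 * C := by
    linarith [mul_nonneg hlam.le habs0, hsum0, hTh0, hcC]
  have h3 : ∑ j, |β j| ≤ B := by
    rw [hBdef, le_div_iff₀ hlam, mul_comm]
    linarith [hsum0, hTh0, hcC]
  have hβj : ∀ j, |β j| ≤ B := fun j =>
    le_trans (Finset.single_le_sum (fun j _ => abs_nonneg (β j)) (Finset.mem_univ j)) h3
  have hXb : ∀ i, |X.mulVec β i| ≤ M * B := by
    intro i
    calc |X.mulVec β i| = |∑ j, X i j * β j| := rfl
      _ ≤ ∑ j, |X i j * β j| := Finset.abs_sum_le_sum_abs _ _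
      _ = ∑ j, |X i j| * |β j| := by simp [abs_mul]
      _ ≤ ∑ j, |X i j| * B :=
          Finset.sum_le_sum fun j _ => mul_le_mul_of_nonneg_left (hβj j) (abs_nonneg _)
      _ = (∑ j, |X i j|) * B := by rw [Finset.sum_mul]
      _ ≤ M * B := by
          apply mul_le_mul_of_nonneg_right _ hB0
          exact Finset.single_le_sum
            (fun i _ => Finset.sum_nonneg fun j _ => abs_nonneg (X i j)) (Finset.mem_univ i)
  have hy : ∀ i, |y i| ≤ Y := fun i =>
    Finset.single_le_sum (fun i _ => abs_nonneg (y i)) (Finset.mem_univ i)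
  have hres : ∀ i, |y i - β₀ - X.mulVec β i - α i| ≤ s := by
    intro i
    rw [hsdef, ← Real.sqrt_sq_eq_abs]
    apply Real.sqrt_le_sqrt
    exact le_trans (Finset.single_le_sum (f := fun i => (y i - β₀ - X.mulVec β i - α i) ^ 2) (fun i _ => sq_nonneg _) (Finset.mem_univ i)) h1
  obtain ⟨Λ, hΛcard, hΛsum⟩ := Th_attained n h hhn α
  have hΛne : Λ.Nonempty := Finset.card_pos.mp (by omega)
  obtain ⟨i₀, hi₀⟩ := hΛne
  have hαi₀ : |α i₀| ≤ s := by
    rw [hsdef, ← Real.sqrt_sq_eq_abs]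
    apply Real.sqrt_le_sqrt
    calc α i₀ ^ 2 ≤ ∑ i ∈ Λ, α i ^ 2 :=
          Finset.single_le_sum (f := fun i => α i ^ 2) (fun i _ => sq_nonneg _) hi₀
      _ = Th n h α := hΛsum.symm
      _ ≤ 2 * C := h2
  have hβ₀ : |β₀| ≤ A := by
    have r1 := abs_le.mp (hres i₀)
    have r2 := abs_le.mp hαi₀
    have r3 := abs_le.mp (hy i₀)
    have r4 := abs_le.mp (hXb i₀)
    rw [abs_le, hAdef]
    constructor <;> linarith [r1.1, r1.2, r2.1, r2.2, r3.1, r3.2, r4.1, r4.2]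
  have hα : ∀ i, |α i| ≤ D := by
    intro i
    have r1 := abs_le.mp (hres i)
    have r2 := abs_le.mp hβ₀
    have r3 := abs_le.mp (hy i)
    have r4 := abs_le.mp (hXb i)
    rw [abs_le, hDdef]
    constructor <;> linarith [r1.1, r1.2, r2.1, r2.2, r3.1, r3.2, r4.1, r4.2]
  have hR0 : (0:ℝ) ≤ max A (max B D) := le_trans hB0 (le_trans (le_max_left _ _) (le_max_right _ _))
  rw [Prod.norm_def, Prod.norm_def]
  refine max_le ?_ (max_le ?_ ?_)
  · exact le_trans (by simpa using hβ₀) (le_max_left _ _)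
  · rw [pi_norm_le_iff_of_nonneg hR0]
    intro j
    exact le_trans (by simpa using hβj j) (le_trans (le_max_left _ _) (le_max_right _ _))
  · rw [pi_norm_le_iff_of_nonneg hR0]
    intro i
    exact le_trans (by simpa using hα i) (le_trans (le_max_right _ _) (le_max_right _ _))
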